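/- Let F be a simplicial presheaf on a small category C which has free degeneracies with splitting presheaves N_k. Then F is the colimit of a sequence sk₀F → sk₁F → sk₂F → ⋯, where sk₀F = N₀ and for each n ≥ 1 the object sk_n F is obtained from sk_{n−1}F by a pushout square: sk_n F is the pushout of sk_{n−1}F ← N_n ⊗ ∂Δⁿ → N_n ⊗ Δⁿ. -/

import Mathlib

open CategoryTheory CategoryTheory.Limits

universe w v u v' u'

namespace Paper

/-- `f` is a retract of `g` in the arrow category. -/
def IsRetractOf {M : Type u} [Category.{v} M] {X Y X' Y' : M}
    (f : X ⟶ Y) (g : X' ⟶ Y') : Prop :=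
  ∃ (i : X ⟶ X') (r : X' ⟶ X) (j : Y ⟶ Y') (s : Y' ⟶ Y),
    i ≫ r = 𝟙 X ∧ j ≫ s = 𝟙 Y ∧ i ≫ g = f ≫ j ∧ g ≫ s = r ≫ f

/-- The class of maps having the left lifting property against every map in `P`. -/
def llp {M : Type u} [Category.{v} M] (P : MorphismProperty M) : MorphismProperty M :=
  fun _ _ i => ∀ ⦃X Y : M⦄ (p : X ⟶ Y), P p → HasLiftingProperty i p

/-- The class of maps having the right lifting property against every map in `P`. -/
def rlp {M : Type u} [Category.{v} M] (P : MorphismProperty M) : MorphismProperty M :=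
  fun _ _ p => ∀ ⦃A B : M⦄ (i : A ⟶ B), P i → HasLiftingProperty i p

/-- A (closed) model structure on a category: classes of weak equivalences,
cofibrations and fibrations satisfying Quillen's axioms (in the `closed` form,
where the cofibrations are determined by lifting against trivial fibrations and
the fibrations by lifting against trivial cofibrations). -/
structure ModelStructure (M : Type u) [Category.{v} M] : Type (max u v) where
  W : MorphismProperty M
  Cof : MorphismProperty M
  Fib : MorphismProperty M
  w_of_isIso : ∀ {X Y : M} (f : X ⟶ Y), IsIso f → W f
  w_comp : ∀ {X Y Z : M} (f : X ⟶ Y) (g : Y ⟶ Z), W f → W g → W (f ≫ g)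
  w_cancel_left : ∀ {X Y Z : M} (f : X ⟶ Y) (g : Y ⟶ Z), W g → W (f ≫ g) → W f
  w_cancel_right : ∀ {X Y Z : M} (f : X ⟶ Y) (g : Y ⟶ Z), W f → W (f ≫ g) → W g
  w_retract : ∀ {X Y X' Y' : M} (f : X ⟶ Y) (g : X' ⟶ Y'),
    IsRetractOf f g → W g → W f
  cof_eq_llp : Cof = llp (fun _ _ p => Fib p ∧ W p)
  fib_eq_rlp : Fib = rlp (fun _ _ i => Cof i ∧ W i)
  factor_cof_trivFib : ∀ {X Y : M} (f : X ⟶ Y),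
    ∃ (Z : M) (i : X ⟶ Z) (p : Z ⟶ Y), Cof i ∧ Fib p ∧ W p ∧ i ≫ p = f
  factor_trivCof_fib : ∀ {X Y : M} (f : X ⟶ Y),
    ∃ (Z : M) (i : X ⟶ Z) (p : Z ⟶ Y), Cof i ∧ W i ∧ Fib p ∧ i ≫ p = f

variable {M : Type u} [Category.{v} M] {N : Type u'} [Category.{v'} N]

/-- An object is cofibrant if the map from the initial object is a cofibration. -/
def ModelStructure.Cofibrant [HasInitial M] (σ : ModelStructure M) (X : M) : Prop :=
  σ.Cof (initial.to X)

/-- An object is fibrant if the map to the terminal object is a fibration. -/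
def ModelStructure.Fibrant [HasTerminal M] (σ : ModelStructure M) (X : M) : Prop :=
  σ.Fib (terminal.from X)

/-- A Quillen pair (map of model categories), regarded in the direction of the
left adjoint. -/
structure QuillenPair (σM : ModelStructure M) (σN : ModelStructure N) where
  L : M ⥤ N
  R : N ⥤ M
  adj : L ⊣ R
  l_cof : ∀ {A B : M} (f : A ⟶ B), σM.Cof f → σN.Cof (L.map f)
  l_trivCof : ∀ {A B : M} (f : A ⟶ B), σM.Cof f → σM.W f → σN.W (L.map f)

/-- A Quillen pair is a Quillen equivalence if for every cofibrant `X` and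
fibrant `Y`, a map `L X ⟶ Y` is a weak equivalence iff its adjoint
`X ⟶ R Y` is. -/
def QuillenPair.IsQuillenEquivalence [HasInitial M] [HasTerminal N]
    {σM : ModelStructure M} {σN : ModelStructure N}
    (Q : QuillenPair σM σN) : Prop :=
  ∀ (X : M) (Y : N), σM.Cofibrant X → σN.Fibrant Y →
    ∀ (f : Q.L.obj X ⟶ Y), σN.W f ↔ σM.W ((Q.adj.homEquiv X Y) f)

end Paper

namespace Paper
open SSet

/-- Kan fibrations of simplicial sets: right lifting property against horn inclusions. -/
def kanFibration : MorphismProperty SSet.{w} :=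
  fun _ _ p => ∀ (n : ℕ) (i : Fin (n + 1)), HasLiftingProperty ((SSet.horn.{w} n i).ι) p

/-- Trivial Kan fibrations: right lifting property against boundary inclusions. -/
def trivialKanFibration : MorphismProperty SSet.{w} :=
  fun _ _ p => ∀ (n : ℕ), HasLiftingProperty ((SSet.boundary.{w} n).ι) p

/-- Weak homotopy equivalences of simplicial sets: maps which factor as a map
with the left lifting property against all Kan fibrations followed by a trivial
Kan fibration. (In the standard Quillen model structure every weak equivalence
factors as a trivial cofibration followed by a trivial fibration, and any such
composite is a weak equivalence, so this is exactly the usual class of weak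
equivalences.) -/
def sSetWeakEquiv : MorphismProperty SSet.{w} :=
  fun X Y f => ∃ (Z : SSet.{w}) (i : X ⟶ Z) (p : Z ⟶ Y),
    llp kanFibration i ∧ trivialKanFibration p ∧ i ≫ p = f

/-- A simplicial set is weakly contractible if the map to the terminal object
is a weak homotopy equivalence. -/
def WeaklyContractibleSSet (X : SSet.{w}) : Prop :=
  sSetWeakEquiv (terminal.from X)

/-- A category is contractible if its nerve is a weakly contractible
simplicial set. -/
def ContractibleCat (D : Type u) [Category.{v} D] : Prop :=
  WeaklyContractibleSSet (nerve D)

/-- The discrete (constant) simplicial set on a set. -/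
def discreteSSet : Type w ⥤ SSet.{w} := Functor.const SimplexCategoryᵒᵖ

/-- The model structure `σ` on a category of simplicial diagrams `D ⥤ sSet` is
the Bousfield–Kan (projective) model structure: weak equivalences and
fibrations are objectwise. (The cofibrations are then determined by the axiom
`cof_eq_llp`.) -/
def IsBKStructure {D : Type u} [Category.{v} D] (σ : ModelStructure (D ⥤ SSet.{w})) : Prop :=
  (∀ {F G : D ⥤ SSet.{w}} (f : F ⟶ G), σ.W f ↔ ∀ X : D, sSetWeakEquiv (f.app X)) ∧
  (∀ {F G : D ⥤ SSet.{w}} (f : F ⟶ G), σ.Fib f ↔ ∀ X : D, kanFibration (f.app X))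

/-- The canonical embedding `r : C ⥤ UC` of `C` into its universal model
category: the Yoneda embedding followed by the inclusion of presheaves of sets
as discrete simplicial presheaves. -/
def rEmbed (C : Type u) [Category.{w} C] : C ⥤ (Cᵒᵖ ⥤ SSet.{w}) :=
  yoneda ⋙ (Functor.whiskeringRight Cᵒᵖ (Type w) SSet.{w}).obj discreteSSet

end Paper
open CategoryTheory CategoryTheory.Limits Opposite

namespace Paper
universe v₃ u₃
variable {M : Type u₃} [Category.{v₃} M]

/-- The latching diagram of a cosimplicial object at `[n]`: the diagram indexed
by the non-identity monomorphisms `[k] ↪ [n]` of `SimplexCategory`. -/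
def latchingDiagram (X : SimplexCategory ⥤ M) (n : SimplexCategory) :
    ObjectProperty.FullSubcategory (fun f : Over n => Mono f.hom ∧ ¬ IsIso f.hom) ⥤ M :=
  ObjectProperty.ι _ ⋙ Over.forget n ⋙ X

/-- The canonical cocone on the latching diagram with vertex `X^n`. -/
def latchingCocone (X : SimplexCategory ⥤ M) (n : SimplexCategory) :
    Cocone (latchingDiagram X n) where
  pt := X.obj n
  ι :=
    { app := fun f => X.map f.obj.hom
      naturality := by
        intro f g e
        dsimp [latchingDiagram]
        simp only [← X.map_comp, Over.w e.hom, Category.comp_id] }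

/-- The canonical map from the latching object `L^n X` to `X^n`. -/
noncomputable def latchingMap [HasColimitsOfSize.{0,0} M] (X : SimplexCategory ⥤ M)
    (n : SimplexCategory) : colimit (latchingDiagram X n) ⟶ X.obj n :=
  colimit.desc _ (latchingCocone X n)

/-- A cosimplicial object is Reedy cofibrant if each latching map is a cofibration. -/
def ReedyCofibrant [HasColimitsOfSize.{0,0} M] (σ : ModelStructure M)
    (X : SimplexCategory ⥤ M) : Prop :=
  ∀ n : SimplexCategory, σ.Cof (latchingMap X n)

/-- The matching diagram of a simplicial object at `[n]`: indexed by the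
non-identity monomorphisms `[k] ↪ [n]`. -/
def matchingDiagram (X : SimplexCategoryᵒᵖ ⥤ M) (n : SimplexCategory) :
    (ObjectProperty.FullSubcategory (fun f : Over n => Mono f.hom ∧ ¬ IsIso f.hom))ᵒᵖ ⥤ M :=
  (ObjectProperty.ι _ ⋙ Over.forget n).op ⋙ X

/-- The canonical cone on the matching diagram with vertex `X_n`. -/
def matchingCone (X : SimplexCategoryᵒᵖ ⥤ M) (n : SimplexCategory) :
    Cone (matchingDiagram X n) where
  pt := X.obj (op n)
  π :=
    { app := fun f => X.map f.unop.obj.hom.op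
      naturality := by
        intro f g e
        dsimp [matchingDiagram]
        simp only [Category.id_comp, ← X.map_comp, ← op_comp, Over.w e.unop.hom] }

/-- The canonical map from `X_n` to the matching object `M_n X`. -/
noncomputable def matchingMap [HasLimitsOfSize.{0,0} M] (X : SimplexCategoryᵒᵖ ⥤ M)
    (n : SimplexCategory) : X.obj (op n) ⟶ limit (matchingDiagram X n) :=
  limit.lift _ (matchingCone X n)

/-- A simplicial object is Reedy fibrant if each matching map is a fibration. -/
def ReedyFibrant [HasLimitsOfSize.{0,0} M] (σ : ModelStructure M)
    (X : SimplexCategoryᵒᵖ ⥤ M) : Prop :=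
  ∀ n : SimplexCategory, σ.Fib (matchingMap X n)

end Paper

namespace Paper
universe w₆ v₆ u₆ v₇ u₇ v₈ u₈
variable {M : Type u₆} [Category.{v₆} M] {N : Type u₇} [Category.{v₇} N]
  {P : Type u₈} [Category.{v₈} P]

/-- Composition of Quillen pairs. -/
def QuillenPair.comp {σM : ModelStructure M} {σN : ModelStructure N} {σP : ModelStructure P}
    (Q : QuillenPair σM σN) (Q' : QuillenPair σN σP) : QuillenPair σM σP where
  L := Q.L ⋙ Q'.L
  R := Q'.R ⋙ Q.R
  adj := Q.adj.comp Q'.adj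
  l_cof := fun f hf => Q'.l_cof _ (Q.l_cof f hf)
  l_trivCof := fun f hc hw => Q'.l_trivCof _ (Q.l_cof f hc) (Q.l_trivCof f hc hw)

/-- A model structure is left proper if the pushout of a weak equivalence along
a cofibration is a weak equivalence. -/
def LeftProper (σ : ModelStructure M) : Prop :=
  ∀ ⦃X Y Z W : M⦄ (f : X ⟶ Y) (g : X ⟶ Z) (h : Y ⟶ W) (i : Z ⟶ W),
    IsPushout f g h i → σ.W f → σ.Cof g → σ.W i

/-- The morphism property associated to a set of arrows. -/
def ofArrowSet (I : Set (Arrow M)) : MorphismProperty M :=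
  fun _ _ f => Arrow.mk f ∈ I

/-- Right lifting property against a set of arrows. -/
def rlpSet (I : Set (Arrow M)) : MorphismProperty M :=
  fun _ _ p => ∀ i ∈ I, HasLiftingProperty i.hom p

/-- A model structure is cofibrantly generated if there are (small) sets `I`
and `J` of maps such that the trivial fibrations are the maps with the right
lifting property against `I`, and the fibrations are the maps with the right
lifting property against `J`. -/
def CofibrantlyGenerated (σ : ModelStructure M) : Prop :=
  ∃ (I J : Set (Arrow M)), Small.{v₆} I ∧ Small.{v₆} J ∧
    (∀ ⦃X Y : M⦄ (p : X ⟶ Y), (σ.Fib p ∧ σ.W p) ↔ rlpSet I p) ∧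
    (∀ ⦃X Y : M⦄ (p : X ⟶ Y), σ.Fib p ↔ rlpSet J p)

/-- A category with a chosen cardinal `κ` is `κ`-filtered if every diagram of
size `< κ` admits a cocone. -/
def IsCardinalFiltered (J : Type v₆) [SmallCategory J] (κ : Cardinal.{v₆}) : Prop :=
  ∀ (K : Type v₆) (_ : SmallCategory K),
    Cardinal.mk (Σ (p : K × K), p.1 ⟶ p.2) < κ → ∀ F : K ⥤ J, Nonempty (Cocone F)

/-- An object is `κ`-presentable (small with respect to `κ`-filtered colimits)
if its Hom functor preserves `κ`-filtered colimits. -/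
def IsPresentable (κ : Cardinal.{v₆}) (X : M) : Prop :=
  ∀ (J : Type v₆) (_ : SmallCategory J), IsCardinalFiltered J κ →
    Nonempty (PreservesColimitsOfShape J (coyoneda.obj (op X)))

/-- A category is locally presentable if there are a regular cardinal `λ` and a
small set `A` of `λ`-presentable objects such that every object is a
`λ`-filtered colimit of objects of `A`. -/
def LocallyPresentable (M : Type u₆) [Category.{v₆} M] : Prop :=
  ∃ (κ : Cardinal.{v₆}), κ.IsRegular ∧ ∃ (A : Set M), Small.{v₆} A ∧
    (∀ X ∈ A, IsPresentable κ X) ∧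
    (∀ X : M, ∃ (J : Type v₆) (_ : SmallCategory J), IsCardinalFiltered J κ ∧
      ∃ (D : J ⥤ M) (_ : ∀ j, D.obj j ∈ A) (c : Cocone D), Nonempty (IsColimit c) ∧
        Nonempty (c.pt ≅ X))

/-- A model category is combinatorial if it is cofibrantly generated and its
underlying category is locally presentable. -/
def IsCombinatorial (σ : ModelStructure M) : Prop :=
  CofibrantlyGenerated σ ∧ LocallyPresentable M

end Paper

namespace Paper
universe v₉ u₉
variable {M : Type u₉} [Category.{v₉} M]

/-- The simplicial function complex `M(Γ^•, W)` determined by a cosimplicial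
object `Γ` and an object `W`. -/
def homComplex (Γ : SimplexCategory ⥤ M) (W : M) : SSet.{v₉} :=
  Γ.op ⋙ yoneda.obj W

/-- A cosimplicial resolution of a map `f : A ⟶ B`: cosimplicial resolutions of
`A` and `B` together with a map between them lifting `f`. -/
structure CosimpResolutionOfMap [HasColimitsOfSize.{0,0} M] (σ : ModelStructure M)
    {A B : M} (f : A ⟶ B) where
  ΓA : SimplexCategory ⥤ M
  ΓB : SimplexCategory ⥤ M
  reedyA : ReedyCofibrant σ ΓA
  reedyB : ReedyCofibrant σ ΓB
  εA : ΓA ⟶ (Functor.const SimplexCategory).obj A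
  εB : ΓB ⟶ (Functor.const SimplexCategory).obj B
  weqA : ∀ n : SimplexCategory, σ.W (εA.app n)
  weqB : ∀ n : SimplexCategory, σ.W (εB.app n)
  Γf : ΓA ⟶ ΓB
  compat : Γf ≫ εB = εA ≫ (Functor.const SimplexCategory).map f

/-- The map of homotopy function complexes `M(ΓB, X) ⟶ M(ΓA, X)` induced by a
cosimplicial resolution of a map. -/
def CosimpResolutionOfMap.inducedMap [HasColimitsOfSize.{0,0} M] {σ : ModelStructure M}
    {A B : M} {f : A ⟶ B} (ρ : CosimpResolutionOfMap σ f) (X : M) :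
    homComplex ρ.ΓB X ⟶ homComplex ρ.ΓA X :=
  Functor.whiskerRight (NatTrans.op ρ.Γf) (yoneda.obj X)

/-- An object `X` is `S`-local if it is fibrant and sees every map of `S` as a
weak equivalence, as measured by homotopy function complexes. -/
def SLocal [HasColimitsOfSize.{0,0} M] [HasTerminal M] (σ : ModelStructure M)
    (S : MorphismProperty M) (X : M) : Prop :=
  σ.Fibrant X ∧ ∀ ⦃A B : M⦄ (f : A ⟶ B), S f →
    ∀ ρ : CosimpResolutionOfMap σ f, sSetWeakEquiv (ρ.inducedMap X)

/-- A map is an `S`-local equivalence if every `S`-local object sees it as a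
weak equivalence. -/
def SLocalEquiv [HasColimitsOfSize.{0,0} M] [HasTerminal M] (σ : ModelStructure M)
    (S : MorphismProperty M) : MorphismProperty M :=
  fun _ _ f => ∀ X : M, SLocal σ S X →
    ∀ ρ : CosimpResolutionOfMap σ f, sSetWeakEquiv (ρ.inducedMap X)

/-- `σS` is the (left) Bousfield localization of `σ` at `S`: same underlying
category, same cofibrations, and the weak equivalences are the `S`-local
equivalences. -/
def IsBousfieldLocalization [HasColimitsOfSize.{0,0} M] [HasTerminal M]
    (σ σS : ModelStructure M) (S : MorphismProperty M) : Prop :=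
  σS.Cof = σ.Cof ∧ ∀ ⦃A B : M⦄ (f : A ⟶ B), (σS.W f ↔ SLocalEquiv σ S f)

end Paper

namespace Paper
universe vₐ uₐ vᵦ uᵦ
variable {M : Type uₐ} [Category.{vₐ} M] {N : Type uᵦ} [Category.{vᵦ} N]

/-- A Quillen homotopy between two Quillen pairs: a natural transformation of
left adjoints which is a weak equivalence on all cofibrant objects. -/
def QuillenHomotopy [HasInitial M] {σM : ModelStructure M} {σN : ModelStructure N}
    (Q₁ Q₂ : QuillenPair σM σN) : Prop :=
  ∃ t : Q₁.L ⟶ Q₂.L, ∀ X : M, σM.Cofibrant X → σN.W (t.app X)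

/-- Two Quillen pairs are Quillen-homotopic if they are connected by a zig-zag
of Quillen homotopies. -/
def QuillenHomotopic [HasInitial M] {σM : ModelStructure M} {σN : ModelStructure N}
    (Q₁ Q₂ : QuillenPair σM σN) : Prop :=
  Relation.ReflTransGen (fun A B => QuillenHomotopy A B ∨ QuillenHomotopy B A) Q₁ Q₂

/-- The left derived functor of the left adjoint of a Quillen pair takes the
map `f` to a weak equivalence: applying the left adjoint to any lift of `f`
to cofibrant replacements yields a weak equivalence. -/
def DerivedImageWeq [HasInitial M] {σM : ModelStructure M} {σN : ModelStructure N}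
    (Q : QuillenPair σM σN) {A B : M} (f : A ⟶ B) : Prop :=
  ∀ (A' B' : M) (pA : A' ⟶ A) (pB : B' ⟶ B) (f' : A' ⟶ B'),
    σM.Cofibrant A' → σM.Cofibrant B' → σM.Fib pA → σM.W pA → σM.Fib pB → σM.W pB →
    f' ≫ pB = pA ≫ f → σN.W (Q.L.map f')

end Paper

namespace Paper
universe w₁ w₂ w₃

/-- The levelwise product of two simplicial sets. -/
def sProd (X Y : SSet.{w₁}) : SSet.{w₁} where
  obj n := X.obj n × Y.obj n
  map α := TypeCat.ofHom (Prod.map (X.map α) (Y.map α))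
  map_id n := by
    ext x <;> simp
  map_comp f g := by
    ext x <;> simp

/-- Product of maps of simplicial sets. -/
def sProdMap {X X' Y Y' : SSet.{w₁}} (f : X ⟶ X') (g : Y ⟶ Y') :
    sProd X Y ⟶ sProd X' Y' where
  app n := TypeCat.ofHom (Prod.map (f.app n) (g.app n))
  naturality m n α := by
    ext x
    apply Prod.ext
    · exact NatTrans.naturality_apply f α x.1
    · exact NatTrans.naturality_apply g α x.2

@[simp] lemma sProdMap_id {X Y : SSet.{w₁}} : sProdMap (𝟙 X) (𝟙 Y) = 𝟙 (sProd X Y) := rfl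

@[simp] lemma sProdMap_comp {X X' X'' Y Y' Y'' : SSet.{w₁}}
    (f : X ⟶ X') (f' : X' ⟶ X'') (g : Y ⟶ Y') (g' : Y' ⟶ Y'') :
    sProdMap (f ≫ f') (g ≫ g') = sProdMap f g ≫ sProdMap f' g' := rfl

/-- Projection onto the first factor. -/
def sProdFst {X Y : SSet.{w₁}} : sProd X Y ⟶ X where
  app n := TypeCat.ofHom Prod.fst

/-- The tensor `F ⊗ K` of a simplicial presheaf with a simplicial set,
given objectwise by `(F ⊗ K)(c) = F(c) × K`. -/
def tensorUC {C : Type w₂} [Category.{w₃} C] (F : Cᵒᵖ ⥤ SSet.{w₁}) (K : SSet.{w₁}) :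
    Cᵒᵖ ⥤ SSet.{w₁} where
  obj c := sProd (F.obj c) K
  map g := sProdMap (F.map g) (𝟙 K)
  map_id c := by
    show sProdMap (F.map (𝟙 c)) (𝟙 K) = 𝟙 (sProd (F.obj c) K)
    rw [F.map_id]; exact sProdMap_id
  map_comp f g := by
    show sProdMap (F.map (f ≫ g)) (𝟙 K) = sProdMap (F.map f) (𝟙 K) ≫ sProdMap (F.map g) (𝟙 K)
    rw [F.map_comp, ← Category.comp_id (𝟙 K)]; exact sProdMap_comp _ _ _ _

/-- Functoriality of the tensor in both variables. -/
def tensorUCMap {C : Type w₂} [Category.{w₃} C] {F F' : Cᵒᵖ ⥤ SSet.{w₁}}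
    {K K' : SSet.{w₁}} (u : F ⟶ F') (v : K ⟶ K') : tensorUC F K ⟶ tensorUC F' K' where
  app c := sProdMap (u.app c) v
  naturality c c' g := by
    ext n x
    have h := ConcreteCategory.congr_hom (congrArg (fun t => NatTrans.app t n) (u.naturality g)) x.1
    exact Prod.ext h rfl

@[simp] lemma tensorUCMap_id {C : Type w₂} [Category.{w₃} C] {F : Cᵒᵖ ⥤ SSet.{w₁}}
    {K : SSet.{w₁}} : tensorUCMap (𝟙 F) (𝟙 K) = 𝟙 (tensorUC F K) := rfl

@[simp] lemma tensorUCMap_comp {C : Type w₂} [Category.{w₃} C]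
    {F F' F'' : Cᵒᵖ ⥤ SSet.{w₁}} {K K' K'' : SSet.{w₁}}
    (u : F ⟶ F') (u' : F' ⟶ F'') (v : K ⟶ K') (v' : K' ⟶ K'') :
    tensorUCMap (u ≫ u') (v ≫ v') = tensorUCMap u v ≫ tensorUCMap u' v' := rfl

/-- Projection `F ⊗ K ⟶ F`. -/
def tensorUCFst {C : Type w₂} [Category.{w₃} C] {F : Cᵒᵖ ⥤ SSet.{w₁}} {K : SSet.{w₁}} :
    tensorUC F K ⟶ F where
  app c := sProdFst
  naturality c c' g := rfl

/-- The map of nerves induced by a functor. -/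
def nerveMap {D : Type w₂} [Category.{w₁} D] {E : Type w₂} [Category.{w₁} E] (G : D ⥤ E) :
    nerve D ⟶ nerve E :=
  nerveFunctor.map (X := Cat.of D) (Y := Cat.of E) G.toCatHom

end Paper

namespace Paper
open CategoryTheory CategoryTheory.Limits Opposite
universe wl wᵢ wc wch

variable {I : Type wᵢ} [SmallCategory I] {C : Type wc} [Category.{wch} C]

/-- The indexing type for the Bousfield–Kan coequalizer: arrows of `I`. -/
def ArrowIndex (I : Type wᵢ) [SmallCategory I] : Type wᵢ := Σ p : I × I, p.1 ⟶ p.2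

/-- The (universe-lifted) nerve of the opposite of the under category,
`B(a ↓ I)ᵒᵖ`. -/
def underNerve (a : I) : SSet.{max wᵢ wl} :=
  nerve (Under a)ᵒᵖ ⋙ uliftFunctor.{wl, wᵢ}

/-- Functoriality of `underNerve`. -/
def underNerveMap {a b : I} (f : a ⟶ b) : underNerve.{wl} b ⟶ underNerve.{wl} a :=
  Functor.whiskerRight (nerveMap (Under.map f).op) uliftFunctor.{wl, wᵢ}

/-- The Bousfield–Kan formula for the homotopy colimit of a diagram of
simplicial presheaves: the coequalizer of
`⨿_{a → b} D(a) ⊗ N(b ↓ I)ᵒᵖ ⇉ ⨿_a D(a) ⊗ N(a ↓ I)ᵒᵖ`. -/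
noncomputable def bkHocolim (D : I ⥤ (Cᵒᵖ ⥤ SSet.{max wᵢ wl})) : Cᵒᵖ ⥤ SSet.{max wᵢ wl} :=
  haveI : HasColimitsOfSize.{wᵢ, wᵢ} (Cᵒᵖ ⥤ SSet.{max wᵢ wl}) :=
    hasColimitsOfSizeShrink.{wᵢ, wᵢ, wl, wl} _
  coequalizer
    (Sigma.desc (fun e : ArrowIndex I =>
      (tensorUCMap (D.map e.2) (𝟙 (underNerve.{wl} e.1.2))) ≫
        Sigma.ι (fun a : I => tensorUC (D.obj a) (underNerve.{wl} a)) e.1.2))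
    (Sigma.desc (fun e : ArrowIndex I =>
      (tensorUCMap (𝟙 (D.obj e.1.1)) (underNerveMap.{wl} e.2)) ≫
        Sigma.ι (fun a : I => tensorUC (D.obj a) (underNerve.{wl} a)) e.1.1))

/-- The canonical map from the Bousfield–Kan homotopy colimit to the vertex of
any cocone on the diagram. -/
noncomputable def bkHocolimDesc (D : I ⥤ (Cᵒᵖ ⥤ SSet.{max wᵢ wl})) (c : Cocone D) :
    bkHocolim.{wl} D ⟶ c.pt := by
  haveI : HasColimitsOfSize.{wᵢ, wᵢ} (Cᵒᵖ ⥤ SSet.{max wᵢ wl}) :=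
    hasColimitsOfSizeShrink.{wᵢ, wᵢ, wl, wl} _
  refine coequalizer.desc (Sigma.desc (fun a : I => tensorUCFst ≫ c.ι.app a)) ?_
  apply Limits.Sigma.hom_ext
  intro e
  simp only [colimit.ι_desc_assoc, Cofan.mk_ι_app, Category.assoc, colimit.ι_desc]
  have h1 : (tensorUCMap (D.map e.2) (𝟙 (underNerve.{wl} e.1.2))) ≫ tensorUCFst
      = tensorUCFst ≫ D.map e.2 := rfl
  have h2 : (tensorUCMap (𝟙 (D.obj e.1.1)) (underNerveMap.{wl} e.2)) ≫ tensorUCFst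
      = tensorUCFst := rfl
  rw [reassoc_of% h1, reassoc_of% h2, c.w]

end Paper

namespace Paper
open CategoryTheory CategoryTheory.Limits Opposite
universe ww wwo vv uu

variable {C : Type wwo} [Category.{ww} C] {M : Type uu} [Category.{vv} M]

/-- A factorization of `γ : C ⥤ M` through the universal model category `UC`:
a Quillen pair `UC ⇄ M` together with a natural weak equivalence `L ∘ r ⟹ γ`. -/
structure Factorization (σU : ModelStructure (Cᵒᵖ ⥤ SSet.{ww})) (σM : ModelStructure M)
    (γ : C ⥤ M) where
  Q : QuillenPair σU σM
  η : rEmbed C ⋙ Q.L ⟶ γ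
  weq : ∀ X : C, σM.W (η.app X)

/-- The category of factorizations: a morphism is a natural transformation of
left adjoints compatible with the structure maps `η`. -/
instance {σU : ModelStructure (Cᵒᵖ ⥤ SSet.{ww})} {σM : ModelStructure M} {γ : C ⥤ M} :
    Category (Factorization σU σM γ) where
  Hom F F' := { t : F.Q.L ⟶ F'.Q.L //
    ∀ X : C, t.app ((rEmbed C).obj X) ≫ F'.η.app X = F.η.app X }
  id F := ⟨𝟙 F.Q.L, by intro X; simp⟩
  comp {F F' F''} t s := ⟨t.1 ≫ s.1, by
    intro X
    rw [NatTrans.comp_app, Category.assoc, s.2 X, t.2 X]⟩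

/-- A cosimplicial resolution of a functor `γ : C ⥤ M`: a functor `Γ` to
cosimplicial objects, objectwise Reedy cofibrant, with a levelwise weak
equivalence to the constant cosimplicial object on `γ`. -/
structure CosRes [HasColimitsOfSize.{0,0} M] (σM : ModelStructure M) (γ : C ⥤ M) where
  Γ : C ⥤ SimplexCategory ⥤ M
  reedy : ∀ X : C, ReedyCofibrant σM (Γ.obj X)
  ρ : Γ ⟶ γ ⋙ Functor.const SimplexCategory
  weq : ∀ (X : C) (n : SimplexCategory), σM.W ((ρ.app X).app n)

/-- The category of cosimplicial resolutions of `γ`. -/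
instance [HasColimitsOfSize.{0,0} M] {σM : ModelStructure M} {γ : C ⥤ M} :
    Category (CosRes σM γ) where
  Hom R R' := { t : R.Γ ⟶ R'.Γ // t ≫ R'.ρ = R.ρ }
  id R := ⟨𝟙 R.Γ, by simp⟩
  comp t s := ⟨t.1 ≫ s.1, by rw [Category.assoc, s.2, t.2]⟩

/-- The canonical embedding `C ⥤ VC` into the dual universal model category. -/
def rEmbedV (C : Type wwo) [Category.{ww} C] : C ⥤ (C ⥤ SSet.{ww})ᵒᵖ :=
  (coyoneda ⋙ (Functor.whiskeringRight C (Type ww) SSet.{ww}).obj discreteSSet).rightOp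

/-- A co-factorization of `γ : C ⥤ M` through `VC`: a Quillen pair
`M ⇄ VC` together with a natural weak equivalence `γ ⟹ R ∘ r`. -/
structure CoFactorization (σM : ModelStructure M) (σV : ModelStructure ((C ⥤ SSet.{ww})ᵒᵖ))
    (γ : C ⥤ M) where
  Q : QuillenPair σM σV
  η : γ ⟶ rEmbedV C ⋙ Q.R
  weq : ∀ X : C, σM.W (η.app X)

/-- The category of co-factorizations: a morphism is a natural transformation
of right adjoints compatible with the structure maps. -/
instance {σM : ModelStructure M} {σV : ModelStructure ((C ⥤ SSet.{ww})ᵒᵖ)} {γ : C ⥤ M} :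
    Category (CoFactorization σM σV γ) where
  Hom F F' := { t : F.Q.R ⟶ F'.Q.R //
    ∀ X : C, F.η.app X ≫ t.app ((rEmbedV C).obj X) = F'.η.app X }
  id F := ⟨𝟙 F.Q.R, by intro X; simp⟩
  comp {F F' F''} t s := ⟨t.1 ≫ s.1, by
    intro X
    rw [NatTrans.comp_app, ← Category.assoc, t.2 X, s.2 X]⟩

/-- A simplicial resolution of a functor `γ : C ⥤ M`: a functor `Φ` to
simplicial objects, objectwise Reedy fibrant, with a levelwise weak
equivalence from the constant simplicial object on `γ`. -/
structure SimpRes [HasLimitsOfSize.{0,0} M] (σM : ModelStructure M) (γ : C ⥤ M) where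
  Φ : C ⥤ SimplexCategoryᵒᵖ ⥤ M
  reedy : ∀ X : C, ReedyFibrant σM (Φ.obj X)
  ρ : γ ⋙ Functor.const SimplexCategoryᵒᵖ ⟶ Φ
  weq : ∀ (X : C) (n : SimplexCategoryᵒᵖ), σM.W ((ρ.app X).app n)

/-- The category of simplicial resolutions of `γ`. -/
instance [HasLimitsOfSize.{0,0} M] {σM : ModelStructure M} {γ : C ⥤ M} :
    Category (SimpRes σM γ) where
  Hom R R' := { t : R.Φ ⟶ R'.Φ // R.ρ ≫ t = R'.ρ }
  id R := ⟨𝟙 R.Φ, by simp⟩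
  comp t s := ⟨t.1 ≫ s.1, by rw [← Category.assoc, t.2, s.2]⟩

end Paper

namespace Paper
open CategoryTheory CategoryTheory.Limits Opposite
universe wl wi wc wch w₁ w₂

/-- A simplicial structure on a model category, making it a simplicial model
category: an action of simplicial sets (tensor), with unit and associativity
isomorphisms, right adjoints in each variable (cotensor and simplicial
enrichment), satisfying Quillen's axiom SM7 in pushout-product form. -/
structure SimplicialModel {M : Type w₂} [Category.{w₁} M] [HasPushouts M]
    (σ : ModelStructure M) where
  tensor : M ⥤ SSet.{w₁} ⥤ M
  unitIso : ∀ X : M,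
    (tensor.obj X).obj (SSet.stdSimplex.obj (SimplexCategory.mk 0)) ≅ X
  assocIso : ∀ (X : M) (K L : SSet.{w₁}),
    (tensor.obj ((tensor.obj X).obj K)).obj L ≅ (tensor.obj X).obj (sProd K L)
  cotensorAdj : ∀ K : SSet.{w₁}, (tensor.flip.obj K).IsLeftAdjoint
  enrichAdj : ∀ X : M, (tensor.obj X).IsLeftAdjoint
  sm7_cof : ∀ {A B : M} (i : A ⟶ B) {K L : SSet.{w₁}} (j : K ⟶ L),
    σ.Cof i → Mono j →
    σ.Cof (pushout.desc ((tensor.map i).app L) ((tensor.obj B).map j)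
      ((tensor.map i).naturality j) :
        pushout ((tensor.obj A).map j) ((tensor.map i).app K) ⟶ (tensor.obj B).obj L)
  sm7_triv_left : ∀ {A B : M} (i : A ⟶ B) {K L : SSet.{w₁}} (j : K ⟶ L),
    σ.Cof i → σ.W i → Mono j →
    σ.W (pushout.desc ((tensor.map i).app L) ((tensor.obj B).map j)
      ((tensor.map i).naturality j))
  sm7_triv_right : ∀ {A B : M} (i : A ⟶ B) {K L : SSet.{w₁}} (j : K ⟶ L),
    σ.Cof i → Mono j → sSetWeakEquiv j →
    σ.W (pushout.desc ((tensor.map i).app L) ((tensor.obj B).map j)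
      ((tensor.map i).naturality j))

end Paper

namespace Paper
open CategoryTheory CategoryTheory.Limits Opposite
universe wb wbo

variable {C : Type wbo} [Category.{wb} C]

/-- The inclusion of presheaves of sets into simplicial presheaves as discrete
simplicial presheaves. -/
def discretize (C : Type wbo) [Category.{wb} C] : (Cᵒᵖ ⥤ Type wb) ⥤ (Cᵒᵖ ⥤ SSet.{wb}) :=
  (Functor.whiskeringRight Cᵒᵖ (Type wb) SSet.{wb}).obj discreteSSet

/-- Evaluation of simplicial sets at a simplicial degree. -/
def evalAtΔ (n : SimplexCategoryᵒᵖ) : SSet.{wb} ⥤ Type wb :=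
  (evaluation SimplexCategoryᵒᵖ (Type wb)).obj n

/-- `f : E ⟶ B` is a cover (local epimorphism) with respect to a Grothendieck
topology: every section of `B` over `X` lifts to `E` along a covering of `X`. -/
def IsCover (J : GrothendieckTopology C) {E B : Cᵒᵖ ⥤ Type wb} (f : E ⟶ B) : Prop :=
  ∀ (X : C) (b : B.obj (op X)),
    Sieve.mk (fun {Y} (g : Y ⟶ X) => ∃ e : E.obj (op Y), f.app (op Y) e = B.map g.op b)
      (by
        intro Y Z g ⟨e, he⟩ h
        exact ⟨E.map h.op e, by rw [FunctorToTypes.naturality, he, ← FunctorToTypes.map_comp_apply, ← op_comp]⟩)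
      ∈ J X

/-- A hypercover of `X`: an augmented simplicial presheaf `U ⟶ rX` such that
every level is a coproduct of representables, `U₀ ⟶ rX` is a cover, and each
matching map `(U^{Δⁿ})₀ ⟶ (U^{∂Δⁿ})₀` is a cover. -/
structure Hypercover (J : GrothendieckTopology C) (X : C) where
  U : Cᵒᵖ ⥤ SSet.{wb}
  aug : U ⟶ (rEmbed C).obj X
  repr : ∀ n : SimplexCategoryᵒᵖ, ∃ (ι : Type wb) (Z : ι → C),
    Nonempty ((U ⋙ evalAtΔ n) ≅ ∐ (fun i => yoneda.obj (Z i)))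
  cover₀ : IsCover J
    (Functor.whiskerRight aug (evalAtΔ (op (SimplexCategory.mk 0))) :
      U ⋙ evalAtΔ _ ⟶ (rEmbed C).obj X ⋙ evalAtΔ _)
  coverMatching : ∀ n : ℕ, 1 ≤ n → IsCover J
    (Functor.whiskerLeft U (coyoneda.map (SSet.boundary.{wb} n).ι.op) :
      U ⋙ coyoneda.obj (op (SSet.stdSimplex.obj (SimplexCategory.mk n)))
        ⟶ U ⋙ coyoneda.obj (op (SSet.boundary n).toSSet))

/-- The simplicial object of discrete simplicial presheaves underlying a
simplicial presheaf. -/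
def levelsDiagram (U : Cᵒᵖ ⥤ SSet.{wb}) : SimplexCategoryᵒᵖ ⥤ (Cᵒᵖ ⥤ SSet.{wb}) :=
  U.flip ⋙ discretize C

/-- The cocone on the levels of a hypercover with vertex `rX`, given by the
augmentation. -/
def Hypercover.coconeAug {J : GrothendieckTopology C} {X : C} (H : Hypercover J X) :
    Cocone (levelsDiagram H.U) where
  pt := (rEmbed C).obj X
  ι :=
    { app := fun n => (discretize C).map
        (Functor.whiskerRight H.aug (evalAtΔ n) : H.U ⋙ evalAtΔ n ⟶ yoneda.obj X)
      naturality := by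
        intro n m α
        dsimp [levelsDiagram]
        erw [Category.comp_id, ← Functor.map_comp]
        congr 1
        ext c x
        exact ConcreteCategory.congr_hom ((H.aug.app c).naturality α) x }

/-- The canonical map `hocolim U_* ⟶ rX` associated to a hypercover. -/
noncomputable def Hypercover.hocolimMap {J : GrothendieckTopology C} {X : C}
    (H : Hypercover J X) : bkHocolim.{wb} (levelsDiagram H.U) ⟶ (rEmbed C).obj X :=
  bkHocolimDesc _ H.coconeAug

/-- The class of maps `{hocolim U_* → rX}` for all hypercovers, at which one
localizes to obtain `UC/T`. -/
def hypercoverHocolimSet (J : GrothendieckTopology C) :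
    MorphismProperty (Cᵒᵖ ⥤ SSet.{wb}) :=
  fun _ _ f => ∃ (X : C) (H : Hypercover J X), Arrow.mk f = Arrow.mk H.hocolimMap

/-- The class of hypercover augmentations `{U → rX}`. -/
def hypercoverAugSet (J : GrothendieckTopology C) :
    MorphismProperty (Cᵒᵖ ⥤ SSet.{wb}) :=
  fun _ _ f => ∃ (X : C) (H : Hypercover J X), Arrow.mk f = Arrow.mk H.aug

/-- The Heller (injective global) model structure on simplicial presheaves:
cofibrations are the monomorphisms and weak equivalences are objectwise. -/
def IsHellerStructure (σ : ModelStructure (Cᵒᵖ ⥤ SSet.{wb})) : Prop :=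
  (∀ ⦃F G : Cᵒᵖ ⥤ SSet.{wb}⦄ (f : F ⟶ G), σ.W f ↔ ∀ X : Cᵒᵖ, sSetWeakEquiv (f.app X)) ∧
  (∀ ⦃F G : Cᵒᵖ ⥤ SSet.{wb}⦄ (f : F ⟶ G), σ.Cof f ↔ Mono f)

/-- Jardine's model structure on simplicial presheaves: cofibrations are the
monomorphisms, and the weak equivalences are the local weak equivalences
(equivalently, by Dugger–Hollander–Isaksen, it is the Bousfield localization of
the Heller structure at the hypercover augmentations). -/
def IsJardineStructure (J : GrothendieckTopology C) (σJar : ModelStructure (Cᵒᵖ ⥤ SSet.{wb})) : Prop :=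
  ∃ σH : ModelStructure (Cᵒᵖ ⥤ SSet.{wb}), IsHellerStructure σH ∧
    IsBousfieldLocalization σH σJar (hypercoverAugSet J)

/-- The Quillen model structure on topological spaces: weak equivalences are
the weak homotopy equivalences (maps whose singular simplicial set map is a
weak equivalence) and fibrations are the Serre fibrations (maps whose singular
simplicial set map is a Kan fibration). -/
def IsTopModelStructure (σ : ModelStructure TopCat.{0}) : Prop :=
  (∀ ⦃X Y : TopCat.{0}⦄ (f : X ⟶ Y), σ.W f ↔ sSetWeakEquiv (TopCat.toSSet.map f)) ∧
  (∀ ⦃X Y : TopCat.{0}⦄ (f : X ⟶ Y), σ.Fib f ↔ kanFibration (TopCat.toSSet.map f))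

end Paper

namespace Paper
open CategoryTheory CategoryTheory.Limits Opposite
universe wq

variable {C : Type wq} [SmallCategory C]

/-- The category of representables over `F` mapping compatibly to `c`: objects
are pairs of an element `(X, x ∈ F(X))` and a map `X ⟶ c` in `Cᵒᵖ`. -/
abbrev ElOver (F : Cᵒᵖ ⥤ Type wq) (c : Cᵒᵖ) : Type wq :=
  CostructuredArrow (CategoryOfElements.π F) c

lemma elMapId (F : Cᵒᵖ ⥤ Type wq) (c : Cᵒᵖ) :
    CostructuredArrow.map (S := CategoryOfElements.π F) (𝟙 c) = 𝟭 _ := by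
  refine CategoryTheory.Functor.ext (fun f => CostructuredArrow.map_id) ?_
  intro X Y φ
  ext
  simp [CostructuredArrow.map, Comma.mapRight]

lemma elMapComp (F : Cᵒᵖ ⥤ Type wq) {c c' c'' : Cᵒᵖ} (g : c ⟶ c') (g' : c' ⟶ c'') :
    CostructuredArrow.map (S := CategoryOfElements.π F) (g ≫ g')
      = CostructuredArrow.map g ⋙ CostructuredArrow.map g' := by
  refine CategoryTheory.Functor.ext
    (fun f => CostructuredArrow.map_comp (f := g) (f' := g')) ?_
  intro X Y φ
  ext
  simp [CostructuredArrow.map, Comma.mapRight]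

/-- The `Cat`-valued functor `c ↦ (ElOver F c)`. -/
def elOverFunctor (F : Cᵒᵖ ⥤ Type wq) : Cᵒᵖ ⥤ Cat.{wq, wq} where
  obj c := Cat.of (ElOver F c)
  map g := (CostructuredArrow.map g).toCatHom
  map_id c := congrArg Functor.toCatHom (elMapId F c)
  map_comp g g' := congrArg Functor.toCatHom (elMapComp F g g') 

/-- The simplicial replacement `Q̃F` of a presheaf of sets `F`: the simplicial
presheaf whose `n`-th level is `⨿ rXₙ`, indexed by the strings
`rXₙ → ⋯ → rX₀ → F`; equivalently, `(Q̃F)(c)` is the nerve of `ElOver F c`. -/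
def tildeQobj (F : Cᵒᵖ ⥤ Type wq) : Cᵒᵖ ⥤ SSet.{wq} :=
  elOverFunctor F ⋙ nerveFunctor

/-- The functor `ElOver F c ⥤ ElOver G c` induced by a map `F ⟶ G`. -/
def elPush {F G : Cᵒᵖ ⥤ Type wq} (u : F ⟶ G) (c : Cᵒᵖ) : ElOver F c ⥤ ElOver G c where
  obj e := CostructuredArrow.mk (S := CategoryOfElements.π G)
    (Y := (CategoryOfElements.map u).obj e.left) e.hom
  map {e e'} φ := CostructuredArrow.homMk ((CategoryOfElements.map u).map φ.left)
    (CostructuredArrow.w φ)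

lemma elPush_id (F : Cᵒᵖ ⥤ Type wq) (c : Cᵒᵖ) : elPush (𝟙 F) c = 𝟭 _ := by
  refine CategoryTheory.Functor.ext (fun e => rfl) (fun X Y φ => ?_)
  erw [eqToHom_refl, eqToHom_refl, Category.comp_id, Category.id_comp]
  exact CostructuredArrow.hom_ext _ _ (CategoryOfElements.ext _ _ _ rfl)

lemma elPush_comp {F G H : Cᵒᵖ ⥤ Type wq} (u : F ⟶ G) (v : G ⟶ H) (c : Cᵒᵖ) :
    elPush (u ≫ v) c = elPush u c ⋙ elPush v c := by
  refine CategoryTheory.Functor.ext (fun e => rfl) (fun X Y φ => ?_)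
  erw [eqToHom_refl, eqToHom_refl, Category.comp_id, Category.id_comp]
  exact CostructuredArrow.hom_ext _ _ (CategoryOfElements.ext _ _ _ rfl)

lemma elPush_natural {F G : Cᵒᵖ ⥤ Type wq} (u : F ⟶ G) {c c' : Cᵒᵖ} (g : c ⟶ c') :
    CostructuredArrow.map g ⋙ elPush u c' = elPush u c ⋙ CostructuredArrow.map g := by
  refine CategoryTheory.Functor.ext (fun e => rfl) (fun X Y φ => ?_)
  erw [eqToHom_refl, eqToHom_refl, Category.comp_id, Category.id_comp]
  exact CostructuredArrow.hom_ext _ _ (CategoryOfElements.ext _ _ _ rfl)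

end Paper

namespace Paper
open CategoryTheory CategoryTheory.Limits Opposite
universe wr

variable {C : Type wr} [SmallCategory C]

/-- The simplicial replacement, as a functor in the presheaf `F`. -/
def tildeQFunctor (C : Type wr) [SmallCategory C] :
    (Cᵒᵖ ⥤ Type wr) ⥤ (Cᵒᵖ ⥤ SSet.{wr}) where
  obj F := tildeQobj F
  map {F G} u :=
    { app := fun c => nerveMap (elPush u c)
      naturality := fun c c' g => by
        dsimp [tildeQobj, elOverFunctor, nerveMap]
        exact congrArg (fun F => nerveFunctor.map (Functor.toCatHom F)) (elPush_natural u g) }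
  map_id F := by
    apply NatTrans.ext
    funext c
    show nerveMap (elPush (𝟙 F) c) = _
    rw [nerveMap, elPush_id]
    exact nerveFunctor.map_id (Cat.of (ElOver F c))
  map_comp {F G H} u v := by
    apply NatTrans.ext
    funext c
    show nerveMap (elPush (u ≫ v) c) = nerveMap (elPush u c) ≫ nerveMap (elPush v c)
    rw [nerveMap, elPush_comp]
    exact nerveFunctor.map_comp (X := Cat.of (ElOver F c)) (Y := Cat.of (ElOver G c))
      (Z := Cat.of (ElOver H c)) (elPush u c).toCatHom (elPush v c).toCatHom

/-- The canonical augmentation `Q̃F ⟶ F` (with `F` viewed as a discrete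
simplicial presheaf). -/
def tildeQaug (F : Cᵒᵖ ⥤ Type wr) : tildeQobj F ⟶ (discretize C).obj F where
  app c :=
    { app := fun n => TypeCat.ofHom (fun σ => F.map (σ.obj 0).hom (σ.obj 0).left.2)
      naturality := by
        intro n m α
        ext σ
        show F.map ((σ.whiskerLeft (SimplexCategory.toCat.map α.unop).toFunctor).obj 0).hom
          ((σ.whiskerLeft (SimplexCategory.toCat.map α.unop).toFunctor).obj 0).left.2 = _
        have hzero : ∀ (j : Fin (n.unop.len + 1)),
            F.map (σ.obj j).hom (σ.obj j).left.2
              = F.map (σ.obj 0).hom (σ.obj 0).left.2 := by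
          intro j
          have φ := σ.map (homOfLE (Fin.zero_le j))
          have w : φ.left.val ≫ (σ.obj j).hom = (σ.obj 0).hom := CostructuredArrow.w φ
          have e := φ.left.property
          exact (congrArg (fun x => F.map (σ.obj j).hom x) e).symm.trans (w ▸ (F.map_comp_apply _ _ _).symm)
        exact hzero _ }
  naturality := by
    intro c c' g
    apply NatTrans.ext
    funext n
    ext σ
    show F.map ((CostructuredArrow.map g).obj ((σ : ComposableArrows _ _).obj 0)).hom
      ((CostructuredArrow.map g).obj (σ.obj 0)).left.2 = _
    have : ((CostructuredArrow.map (S := CategoryOfElements.π F) g).obj (σ.obj 0)).hom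
        = (σ.obj 0).hom ≫ g := rfl
    rw [this]
    exact FunctorToTypes.map_comp_apply F _ _ _

/-- Naturality of the augmentation in `F`. -/
lemma tildeQaug_natural {F G : Cᵒᵖ ⥤ Type wr} (u : F ⟶ G) :
    (tildeQFunctor C).map u ≫ tildeQaug G = tildeQaug F ≫ (discretize C).map u := by
  apply NatTrans.ext
  funext c
  apply NatTrans.ext
  funext n
  ext σ
  show G.map ((elPush u c).obj ((σ : ComposableArrows _ _).obj 0)).hom
    ((elPush u c).obj (σ.obj 0)).left.2 = _
  exact (ConcreteCategory.congr_hom (u.naturality (σ.obj 0).hom) (σ.obj 0).left.2).symm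

end Paper

namespace Paper
open CategoryTheory CategoryTheory.Limits Opposite
universe ws

/-- The diagonal of a bisimplicial set. -/
def diagSSet : (SimplexCategoryᵒᵖ ⥤ SSet.{ws}) ⥤ SSet.{ws} :=
  Functor.uncurry ⋙ (Functor.whiskeringLeft SimplexCategoryᵒᵖ (SimplexCategoryᵒᵖ × SimplexCategoryᵒᵖ)
    (Type ws)).obj (Functor.diag SimplexCategoryᵒᵖ)

variable {C : Type ws} [SmallCategory C]

/-- The cofibrant replacement `QF` of a simplicial presheaf `F`: the diagonal
of the bisimplicial presheaf obtained by applying the simplicial replacement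
`Q̃` to `F` levelwise. -/
def bigQ (F : Cᵒᵖ ⥤ SSet.{ws}) : Cᵒᵖ ⥤ SSet.{ws} :=
  (F.flip ⋙ tildeQFunctor C).flip ⋙ diagSSet

/-- The canonical augmentation `QF ⟶ F`. -/
def bigQaug (F : Cᵒᵖ ⥤ SSet.{ws}) : bigQ F ⟶ F where
  app c :=
    { app := fun n => ((tildeQaug (F.flip.obj n)).app c).app n
      naturality := by
        intro n m α
        ext σ
        have h1 := ConcreteCategory.congr_hom (((tildeQaug (F.flip.obj m)).app c).naturality α)
          ((((tildeQFunctor C).map (F.flip.map α)).app c).app n σ)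
        have h2 := ConcreteCategory.congr_hom (congrArg (fun (t : tildeQobj (F.flip.obj n) ⟶
            ((discretize C).obj (F.flip.obj m))) => (t.app c).app n)
          (tildeQaug_natural (F.flip.map α))) σ
        exact h1.trans h2
      }
  naturality := by
    intro c c' g
    apply NatTrans.ext
    funext n
    ext σ
    exact ConcreteCategory.congr_hom (congrArg (fun t => NatTrans.app t n)
      ((tildeQaug (F.flip.obj n)).naturality g)) σ

end Paper
open CategoryTheory CategoryTheory.Limits Opposite

namespace Paper

/-- The presheaf of `k`-simplices of a simplicial presheaf. -/
def levelAt {C : Type w} [SmallCategory C] (F : Cᵒᵖ ⥤ SSet.{w}) (k : ℕ) : Cᵒᵖ ⥤ Type w :=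
  F ⋙ evalAtΔ (op (SimplexCategory.mk k))

/-- The simplicial operator `α* : F_b ⟶ F_a` induced by `α : [a] ⟶ [b]`. -/
def levelOp {C : Type w} [SmallCategory C] (F : Cᵒᵖ ⥤ SSet.{w}) {a b : SimplexCategory}
    (α : a ⟶ b) : (F ⋙ evalAtΔ (op b)) ⟶ (F ⋙ evalAtΔ (op a)) :=
  Functor.whiskerLeft F ((evaluation SimplexCategoryᵒᵖ (Type w)).map α.op)

/-- The indexing set of the degenerate part in degree `k`: surjections
`[k] ↠ [n]`. -/
def SurjIndex (k : ℕ) : Type w :=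
  Σ n : ULift.{w} ℕ, { σ : SimplexCategory.mk k ⟶ SimplexCategory.mk n.down //
    Function.Surjective σ.toOrderHom }

/-- A free degeneracy decomposition (splitting) of a simplicial presheaf `F`:
sub-presheaves `N_k ⊆ F_k` such that the canonical map
`⨿_σ N_σ ⟶ F_k`, over the surjections `σ : [k] ↠ [n]`, is an isomorphism. -/
structure FreeDegeneracies {C : Type w} [SmallCategory C] (F : Cᵒᵖ ⥤ SSet.{w}) where
  N : ℕ → (Cᵒᵖ ⥤ Type w)
  ι : ∀ k : ℕ, N k ⟶ levelAt F k
  mono : ∀ k : ℕ, Mono (ι k)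
  iso : ∀ k : ℕ, IsIso (Sigma.desc (fun s : SurjIndex.{w} k =>
    ι s.1.down ≫ levelOp F s.2.1) : (∐ fun s : SurjIndex.{w} k => N s.1.down) ⟶ levelAt F k)

end Paper
namespace Helper
open Classical in
/-- Criterion for a commutative square of types to be a pushout. -/
noncomputable def pushoutCoconeIsColimitOfTypes {A B C D : Type w} (f : A ⟶ B) (g : A ⟶ C)
    (h : B ⟶ D) (k : C ⟶ D) (w : f ≫ h = g ≫ k)
    (kinj : Function.Injective k)
    (jsurj : ∀ d : D, (∃ c, k c = d) ∨ (∃ b, h b = d))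
    (hinj : ∀ b b', h b = h b' → b = b' ∨ ∃ a a', f a = b ∧ f a' = b' ∧ g a = g a')
    (sep : ∀ b c, h b = k c → ∃ a, f a = b) :
    IsColimit (PushoutCocone.mk h k w) := by
  have comm : ∀ a, h (f a) = k (g a) := fun a => ConcreteCategory.congr_hom w a
  refine PushoutCocone.IsColimit.mk w
    (fun s => TypeCat.ofHom (fun d => if hc : ∃ c, k c = d then s.inr hc.choose
      else s.inl ((jsurj d).resolve_left hc).choose)) ?_ ?_ ?_
  · intro s
    ext b
    show (if hc : ∃ c, k c = h b then s.inr hc.choose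
      else s.inl ((jsurj (h b)).resolve_left hc).choose) = s.inl b
    by_cases hc : ∃ c, k c = h b
    · rw [dif_pos hc]
      obtain ⟨a, ha⟩ := sep b hc.choose hc.choose_spec.symm
      have hga : k (g a) = k hc.choose := by rw [← comm a, ha, hc.choose_spec]
      have := kinj hga
      rw [← this]
      have := ConcreteCategory.congr_hom s.condition a
      dsimp at this
      rw [← this, ha]
    · rw [dif_neg hc]
      have hb' : h ((jsurj (h b)).resolve_left hc).choose = h b :=
        ((jsurj (h b)).resolve_left hc).choose_spec
      rcases hinj _ b hb' with heq | ⟨a, a', ha, ha', hg⟩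
      · rw [heq]
      · exact absurd ⟨g a', by rw [← comm a', ha']⟩ hc
  · intro s
    ext c
    show (if hc : ∃ c', k c' = k c then s.inr hc.choose
      else s.inl ((jsurj (k c)).resolve_left hc).choose) = s.inr c
    have hc : ∃ c', k c' = k c := ⟨c, rfl⟩
    rw [dif_pos hc]
    rw [kinj hc.choose_spec]
  · intro s m hminl hminr
    ext d
    show m d = (if hc : ∃ c, k c = d then s.inr hc.choose
      else s.inl ((jsurj d).resolve_left hc).choose)
    by_cases hc : ∃ c, k c = d
    · rw [dif_pos hc]
      conv_lhs => rw [← hc.choose_spec]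
      exact ConcreteCategory.congr_hom hminr _
    · rw [dif_neg hc]
      have hb := ((jsurj d).resolve_left hc).choose_spec
      conv_lhs => rw [← hb]
      exact ConcreteCategory.congr_hom hminl _

/-- Pointwise pushouts in a functor category give pushouts. -/
lemma isPushout_of_app {K : Type u} [Category.{v} K] {D : Type u'} [Category.{v'} D]
    {P X Y W : K ⥤ D} {f : P ⟶ X} {g : P ⟶ Y} {h : X ⟶ W} {i : Y ⟶ W}
    (sq : CommSq f g h i)
    (pw : ∀ k : K, IsPushout (f.app k) (g.app k) (h.app k) (i.app k)) :
    IsPushout f g h i := by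
  refine IsPushout.of_isColimit' sq (evaluationJointlyReflectsColimits _ (fun k => ?_))
  have pk := (pw k).isColimit
  let e : span (f.app k) (g.app k) ≅ span f g ⋙ (evaluation K D).obj k :=
    NatIso.ofComponents (fun j => by
      rcases j with _ | _ | _ <;> exact Iso.refl _)
      (by rintro _ _ (_ | _ | _) <;> dsimp <;> simp)
  refine (IsColimit.precomposeHomEquiv e _) (pk.ofIsoColimit (Cocones.ext (Iso.refl _) ?_))
  rintro (_ | _ | _) <;> exact (Category.comp_id _).trans (Category.id_comp _).symm

end Helper

namespace Paper
namespace S15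
open Simplicial

/-- The index of a surjection out of `a`. -/
abbrev SIdx (a : SimplexCategory) : Type w :=
  Σ n : ULift.{w} ℕ, { σ : a ⟶ SimplexCategory.mk n.down // Function.Surjective σ.toOrderHom }

variable {C : Type w} [SmallCategory C] (F : Cᵒᵖ ⥤ SSet.{w}) (fd : FreeDegeneracies F)

/-- The canonical map from the disjoint union of the `N`'s to `F`. -/
def mapK (a : SimplexCategory) (c : Cᵒᵖ)
    (p : Σ s : SIdx.{w} a, (fd.N s.1.down).obj c) : (F.obj c).obj (op a) :=
  (F.obj c).map p.1.2.1.op ((fd.ι p.1.1.down).app c p.2)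

/-- The sigma presheaf. -/
def sigmaPre (k : ℕ) : Cᵒᵖ ⥤ Type w where
  obj c := Σ s : SurjIndex.{w} k, (fd.N s.1.down).obj c
  map g := TypeCat.ofHom (fun p => ⟨p.1, (fd.N p.1.1.down).map g p.2⟩)
  map_id c := by
    refine ConcreteCategory.hom_ext _ _ (fun p => ?_)
    exact Sigma.ext rfl (heq_of_eq (ConcreteCategory.congr_hom ((fd.N p.1.1.down).map_id c) p.2))
  map_comp f g := by
    refine ConcreteCategory.hom_ext _ _ (fun p => ?_)
    exact Sigma.ext rfl (heq_of_eq (ConcreteCategory.congr_hom ((fd.N p.1.1.down).map_comp f g) p.2))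

/-- Tagging components. -/
def tagComp (k : ℕ) (s : SurjIndex.{w} k) : fd.N s.1.down ⟶ sigmaPre F fd k where
  app c := TypeCat.ofHom (fun y => ⟨s, y⟩)
  naturality _ _ _ := rfl

/-- Tagging map. -/
noncomputable def sigmaDesc (k : ℕ) :
    (∐ fun s : SurjIndex.{w} k => fd.N s.1.down) ⟶ sigmaPre F fd k :=
  Sigma.desc (tagComp F fd k)

lemma sigmaDesc_ι (k : ℕ) (s : SurjIndex.{w} k) (c : Cᵒᵖ) (y : (fd.N s.1.down).obj c) :
    (sigmaDesc F fd k).app c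
      ((Sigma.ι (fun s : SurjIndex.{w} k => fd.N s.1.down) s).app c y) = ⟨s, y⟩ :=
  ConcreteCategory.congr_hom (congr_app (Sigma.ι_desc (f := fun s : SurjIndex.{w} k => fd.N s.1.down)
    (p := tagComp F fd k) s) c) y

lemma bijK_mk (k : ℕ) (c : Cᵒᵖ) :
    Function.Bijective (mapK.{w} F fd (SimplexCategory.mk k) c) := by
  haveI hiso : IsIso (Sigma.desc (fun s : SurjIndex.{w} k =>
      fd.ι s.1.down ≫ levelOp F s.2.1)) := fd.iso k
  set d := (Sigma.desc fun s : SurjIndex.{w} k => fd.ι s.1.down ≫ levelOp F s.2.1) with hd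
  have key : ∀ p : Σ s : SIdx.{w} (SimplexCategory.mk k), (fd.N s.1.down).obj c,
      mapK F fd _ c p
        = d.app c ((Sigma.ι (fun s : SurjIndex.{w} k => fd.N s.1.down) p.1).app c p.2) := by
    intro p
    exact (ConcreteCategory.congr_hom (congr_app (Sigma.ι_desc (f := fun s : SurjIndex.{w} k => fd.N s.1.down)
      (p := fun s => fd.ι s.1.down ≫ levelOp F s.2.1) p.1) c) p.2).symm
  constructor
  · intro p p' hpp
    rw [key, key] at hpp
    haveI : IsIso (d.app c) := inferInstance
    have hdinj : Function.Injective (d.app c) := ((isIso_iff_bijective _).1 this).1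
    have h2 := hdinj hpp
    have h3 := congrArg ((sigmaDesc F fd k).app c) h2
    exact (sigmaDesc_ι F fd k p.1 c p.2).symm.trans (h3.trans (sigmaDesc_ι F fd k p'.1 c p'.2))
  · intro x
    haveI : IsIso (d.app c) := inferInstance
    obtain ⟨⟨s⟩, y, hy⟩ := Types.jointly_surjective _
      (isColimitOfPreserves ((evaluation Cᵒᵖ (Type w)).obj c)
        (colimit.isColimit (Discrete.functor fun s : SurjIndex.{w} k => fd.N s.1.down)))
      ((inv (d.app c)) x)
    refine ⟨⟨s, y⟩, ?_⟩
    rw [key]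
    have hx : d.app c (inv (d.app c) x) = x := ConcreteCategory.congr_hom (IsIso.inv_hom_id (d.app c)) x
    have hy' : (Sigma.ι (fun s : SurjIndex.{w} k => fd.N s.1.down) s).app c y
        = inv (d.app c) x := hy
    rw [hy', hx]

lemma bijK (a : SimplexCategory) (c : Cᵒᵖ) :
    Function.Bijective (mapK.{w} F fd a c) := by
  induction a using SimplexCategory.rec with
  | _ n => exact bijK_mk F fd n c

lemma exists_decomp (a : SimplexCategory) (c : Cᵒᵖ) (x : (F.obj c).obj (op a)) :
    ∃ p, mapK.{w} F fd a c p = x :=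
  (bijK F fd a c).2 x

lemma mapK_inj {a : SimplexCategory} {c : Cᵒᵖ} :
    Function.Injective (mapK.{w} F fd a c) :=
  (bijK F fd a c).1

lemma mapK_deg_eq {a : SimplexCategory} {c : Cᵒᵖ} {m m' : ℕ}
    {σ : a ⟶ ⦋m⦌} {σ' : a ⟶ ⦋m'⦌} {hσ : Function.Surjective σ.toOrderHom}
    {hσ' : Function.Surjective σ'.toOrderHom}
    {y : (fd.N m).obj c} {y' : (fd.N m').obj c}
    (h : mapK.{w} F fd a c ⟨⟨⟨m⟩, σ, hσ⟩, y⟩ = mapK.{w} F fd a c ⟨⟨⟨m'⟩, σ', hσ'⟩, y'⟩) :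
    m = m' :=
  congrArg (fun q => q.1.1.down) (mapK_inj F fd h)

lemma mapK_inj' {a : SimplexCategory} {c : Cᵒᵖ} {m : ℕ}
    {σ σ' : a ⟶ ⦋m⦌} {hσ : Function.Surjective σ.toOrderHom}
    {hσ' : Function.Surjective σ'.toOrderHom}
    {y y' : (fd.N m).obj c}
    (h : mapK.{w} F fd a c ⟨⟨⟨m⟩, σ, hσ⟩, y⟩ = mapK.{w} F fd a c ⟨⟨⟨m⟩, σ', hσ'⟩, y'⟩) :
    σ = σ' ∧ y = y' := by
  have e := mapK_inj F fd h
  injection e with h1 h2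
  injection h1 with h3 h4
  exact ⟨congrArg Subtype.val h4, h2⟩

/-- Membership in the `n`-skeleton. -/
def mem (n : ℕ) (c : Cᵒᵖ) (a : SimplexCategoryᵒᵖ) (x : (F.obj c).obj a) : Prop :=
  ∃ p : Σ s : SIdx.{w} a.unop, (fd.N s.1.down).obj c,
    p.1.1.down ≤ n ∧ mapK.{w} F fd a.unop c p = x

lemma mem_mono {n m : ℕ} (h : n ≤ m) {c a x} (hx : mem.{w} F fd n c a x) :
    mem.{w} F fd m c a x := by
  obtain ⟨p, hp, hmap⟩ := hx
  exact ⟨p, le_trans hp h, hmap⟩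

lemma mem_theta {c : Cᵒᵖ} {a : SimplexCategory} {m : ℕ} (θ : a ⟶ ⦋m⦌) (y : (fd.N m).obj c)
    {n : ℕ} (hn : (image θ).len ≤ n) :
    mem.{w} F fd n c (op a) ((F.obj c).map θ.op ((fd.ι m).app c y)) := by
  obtain ⟨p, hp⟩ := exists_decomp F fd (image θ) c
    ((F.obj c).map (image.ι θ).op ((fd.ι m).app c y))
  have hdeg : p.1.1.down ≤ (image θ).len := by
    have : Epi p.1.2.1 := SimplexCategory.epi_iff_surjective.2 p.1.2.2
    simpa using SimplexCategory.len_le_of_epi p.1.2.1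
  refine ⟨⟨⟨p.1.1, factorThruImage θ ≫ p.1.2.1, ?_⟩, p.2⟩, le_trans hdeg hn, ?_⟩
  · rw [SimplexCategory.comp_toOrderHom]
    intro z
    obtain ⟨u, hu⟩ := p.1.2.2 z
    obtain ⟨v, hv⟩ := SimplexCategory.epi_iff_surjective.1
      (inferInstance : Epi (factorThruImage θ)) u
    refine ⟨v, ?_⟩
    show p.1.2.1.toOrderHom ((factorThruImage θ).toOrderHom v) = z
    rw [hv, hu]
  · show (F.obj c).map (factorThruImage θ ≫ p.1.2.1).op ((fd.ι p.1.1.down).app c p.2) = _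
    rw [op_comp, (F.obj c).map_comp]
    show (F.obj c).map (factorThruImage θ).op (mapK F fd _ c p) = _
    rw [hp]
    erw [← FunctorToTypes.map_comp_apply]
    rw [← op_comp, image.fac θ]

lemma image_len_le {a : SimplexCategory} {m : ℕ} (θ : a ⟶ ⦋m⦌) :
    (image θ).len ≤ m := by
  simpa using SimplexCategory.len_le_of_mono (image.ι θ)

lemma image_len_lt {a : SimplexCategory} {m : ℕ} (θ : a ⟶ ⦋m⦌)
    (h : ¬ Function.Surjective θ.toOrderHom) : (image θ).len < m := by
  rcases lt_or_eq_of_le (image_len_le θ) with hlt | heqm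
  · exact hlt
  exfalso
  apply h
  have hsurjι : Function.Surjective (image.ι θ).toOrderHom := by
    have hinj : Function.Injective (image.ι θ).toOrderHom :=
      SimplexCategory.mono_iff_injective.1 inferInstance
    refine ((Fintype.bijective_iff_injective_and_card
      (image.ι θ).toOrderHom).2 ⟨hinj, ?_⟩).2
    simp [heqm]
  have hfac : θ = factorThruImage θ ≫ image.ι θ := (image.fac θ).symm
  rw [hfac, SimplexCategory.comp_toOrderHom]
  intro z
  obtain ⟨u, hu⟩ := hsurjι z
  obtain ⟨v, hv⟩ := SimplexCategory.epi_iff_surjective.1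
    (inferInstance : Epi (factorThruImage θ)) u
  refine ⟨v, ?_⟩
  show (image.ι θ).toOrderHom ((factorThruImage θ).toOrderHom v) = z
  rw [hv, hu]

lemma mem_map {n : ℕ} {c : Cᵒᵖ} {a b : SimplexCategoryᵒᵖ} (α : a ⟶ b)
    {x : (F.obj c).obj a} (hx : mem.{w} F fd n c a x) :
    mem.{w} F fd n c b ((F.obj c).map α x) := by
  obtain ⟨⟨⟨⟨m⟩, σ, hσ⟩, y⟩, hm, hmap⟩ := hx
  rw [← hmap]
  show mem F fd n c b ((F.obj c).map α ((F.obj c).map σ.op ((fd.ι m).app c y)))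
  erw [← FunctorToTypes.map_comp_apply]
  have hcomp : σ.op ≫ α = (α.unop ≫ σ).op := rfl
  rw [hcomp]
  exact mem_theta F fd (α.unop ≫ σ) y
    (le_trans (image_len_le (α.unop ≫ σ)) hm)

lemma mem_comap {n : ℕ} {c c' : Cᵒᵖ} (g : c ⟶ c') {a : SimplexCategoryᵒᵖ}
    {x : (F.obj c).obj a} (hx : mem.{w} F fd n c a x) :
    mem.{w} F fd n c' a ((F.map g).app a x) := by
  obtain ⟨⟨⟨⟨m⟩, σ, hσ⟩, y⟩, hm, hmap⟩ := hx
  refine ⟨⟨⟨⟨m⟩, σ, hσ⟩, (fd.N m).map g y⟩, hm, ?_⟩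
  show (F.obj c').map σ.op ((fd.ι m).app c' ((fd.N m).map g y)) = _
  have h1 : (fd.ι m).app c' ((fd.N m).map g y)
      = (F.map g).app (op ⦋m⦌) ((fd.ι m).app c y) :=
    ConcreteCategory.congr_hom ((fd.ι m).naturality g) y
  rw [h1, ← hmap]
  exact (ConcreteCategory.congr_hom ((F.map g).naturality σ.op) ((fd.ι m).app c y)).symm

/-- The `n`-skeleton of `F`. -/
def Sk (n : ℕ) : Cᵒᵖ ⥤ SSet.{w} where
  obj c :=
    { obj := fun a => { x : (F.obj c).obj a // mem.{w} F fd n c a x }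
      map := fun α => TypeCat.ofHom (fun x => ⟨(F.obj c).map α x.1, mem_map F fd α x.2⟩)
      map_id := fun a => by
        ext x; exact (ConcreteCategory.congr_hom ((F.obj c).map_id a) x.1)
      map_comp := fun α β => by
        ext x; exact (ConcreteCategory.congr_hom ((F.obj c).map_comp α β) x.1) }
  map g :=
    { app := fun a => TypeCat.ofHom (fun x => ⟨(F.map g).app a x.1, mem_comap F fd g x.2⟩)
      naturality := fun a b α => by
        ext x
        exact (ConcreteCategory.congr_hom ((F.map g).naturality α) x.1) }
  map_id c := by
    apply NatTrans.ext; funext a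
    ext x
    exact (ConcreteCategory.congr_hom (congr_app (F.map_id c) a) x.1)
  map_comp f g := by
    apply NatTrans.ext; funext a
    ext x
    exact (ConcreteCategory.congr_hom (congr_app (F.map_comp f g) a) x.1)

/-- Inclusions of skeleta. -/
def skIncl {n m : ℕ} (h : n ≤ m) : Sk.{w} F fd n ⟶ Sk.{w} F fd m where
  app c :=
    { app := fun a => TypeCat.ofHom (fun x => ⟨x.1, mem_mono F fd h x.2⟩)
      naturality := fun a b α => by ext x; exact Subtype.ext rfl }
  naturality c c' g := by
    apply NatTrans.ext; funext a; ext x; exact Subtype.ext rfl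

/-- The skeletal filtration as a functor. -/
def skel : ℕ ⥤ (Cᵒᵖ ⥤ SSet.{w}) where
  obj n := Sk.{w} F fd n
  map {n m} h := skIncl F fd (leOfHom h)
  map_id n := by
    apply NatTrans.ext; funext c; apply NatTrans.ext; funext a; ext x
    exact Subtype.ext rfl
  map_comp {n m l} f g := by
    apply NatTrans.ext; funext c; apply NatTrans.ext; funext a; ext x
    exact Subtype.ext rfl

end S15
end Paper
namespace Paper
namespace S15
open Simplicial

variable {C : Type w} [SmallCategory C] (F : Cᵒᵖ ⥤ SSet.{w}) (fd : FreeDegeneracies F)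

/-- The unique map to `⦋0⦌`. -/
def toZero (a : SimplexCategory) : a ⟶ ⦋0⦌ :=
  SimplexCategory.Hom.mk ⟨fun _ => 0, fun _ _ _ => le_refl _⟩

lemma subsingleton_fin_zero : Subsingleton (Fin (SimplexCategory.len ⦋0⦌ + 1)) := by
  rw [SimplexCategory.len_mk]
  exact Fin.subsingleton_one

lemma toZero_surj (a : SimplexCategory) : Function.Surjective (toZero a).toOrderHom := by
  haveI := subsingleton_fin_zero
  exact fun _ => ⟨0, Subsingleton.elim _ _⟩

lemma toZero_unique {a : SimplexCategory} (σ σ' : a ⟶ ⦋0⦌) : σ = σ' := by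
  haveI := subsingleton_fin_zero
  apply SimplexCategory.Hom.ext
  apply OrderHom.ext
  funext z
  exact Subsingleton.elim _ _

/-- Comparison of `N₀` with the `0`-skeleton. -/
def zeroHom : (discretize C).obj (fd.N 0) ⟶ Sk.{w} F fd 0 where
  app c :=
    { app := fun a => TypeCat.ofHom (fun y =>
        ⟨mapK F fd a.unop c ⟨⟨⟨0⟩, toZero a.unop, toZero_surj a.unop⟩, y⟩,
          ⟨_, le_refl 0, rfl⟩⟩)
      naturality := fun a b α => by
        ext y
        apply Subtype.ext
        show (F.obj c).map (toZero b.unop).op ((fd.ι 0).app c y)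
          = (F.obj c).map α ((F.obj c).map (toZero a.unop).op ((fd.ι 0).app c y))
        erw [← FunctorToTypes.map_comp_apply]
        congr 1 }
  naturality c c' g := by
    apply NatTrans.ext
    funext a
    ext y
    apply Subtype.ext
    show (F.obj c').map (toZero a.unop).op ((fd.ι 0).app c' ((fd.N 0).map g y))
      = (F.map g).app a ((F.obj c).map (toZero a.unop).op ((fd.ι 0).app c y))
    have hnat : (fd.ι 0).app c' ((fd.N 0).map g y)
        = (F.map g).app (op ⦋0⦌) ((fd.ι 0).app c y) :=
      ConcreteCategory.congr_hom ((fd.ι 0).naturality g) y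
    rw [hnat]
    exact (ConcreteCategory.congr_hom ((F.map g).naturality (toZero a.unop).op) _).symm

lemma zeroHom_bij (c : Cᵒᵖ) (a : SimplexCategoryᵒᵖ) :
    Function.Bijective (((zeroHom.{w} F fd).app c).app a) := by
  constructor
  · intro y y' h
    exact (mapK_inj' F fd (congrArg Subtype.val h)).2
  · rintro ⟨x, ⟨⟨⟨⟨p⟩, σ, hσ⟩, y⟩, hp, hmap⟩⟩
    have hp0 : p = 0 := Nat.le_zero.mp hp
    subst hp0
    refine ⟨y, ?_⟩
    apply Subtype.ext
    show mapK F fd a.unop c ⟨⟨⟨0⟩, toZero a.unop, toZero_surj a.unop⟩, y⟩ = x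
    rw [← hmap]
    show (F.obj c).map (toZero a.unop).op ((fd.ι 0).app c y)
      = (F.obj c).map σ.op ((fd.ι 0).app c y)
    rw [toZero_unique (toZero a.unop) σ]

/-- The `0`-skeleton is the discrete presheaf `N₀`. -/
noncomputable def iso0 : (skel.{w} F fd).obj 0 ≅ (discretize C).obj (fd.N 0) := by
  haveI : ∀ c, IsIso ((zeroHom.{w} F fd).app c) := by
    intro c
    haveI : ∀ a, IsIso (((zeroHom.{w} F fd).app c).app a) := fun a =>
      (isIso_iff_bijective _).2 (zeroHom_bij F fd c a)
    exact NatIso.isIso_of_isIso_app _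
  haveI : IsIso (zeroHom.{w} F fd) := NatIso.isIso_of_isIso_app _
  exact (asIso (zeroHom.{w} F fd)).symm

/-- The attaching map `N_{n+1} ⊗ ∂Δ⦋n+1⦌ ⟶ sk_n F`. -/
def attMap (n : ℕ) :
    tensorUC ((discretize C).obj (fd.N (n+1))) (SSet.boundary.{w} (n+1)).toSSet ⟶ Sk.{w} F fd n where
  app c :=
    { app := fun a => TypeCat.ofHom (fun q =>
        ⟨(F.obj c).map q.2.1.down.op ((fd.ι (n+1)).app c q.1),
          mem_theta F fd q.2.1.down q.1
            (Nat.lt_succ_iff.mp (image_len_lt q.2.1.down q.2.2))⟩)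
      naturality := fun a b α => by
        ext q
        apply Subtype.ext
        show (F.obj c).map (α.unop ≫ q.2.1.down).op ((fd.ι (n+1)).app c q.1)
          = (F.obj c).map α ((F.obj c).map q.2.1.down.op ((fd.ι (n+1)).app c q.1))
        erw [← FunctorToTypes.map_comp_apply]
        rfl }
  naturality c c' g := by
    apply NatTrans.ext
    funext a
    ext q
    apply Subtype.ext
    show (F.obj c').map q.2.1.down.op ((fd.ι (n+1)).app c' ((fd.N (n+1)).map g q.1))
      = (F.map g).app a ((F.obj c).map q.2.1.down.op ((fd.ι (n+1)).app c q.1))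
    have hnat : (fd.ι (n+1)).app c' ((fd.N (n+1)).map g q.1)
        = (F.map g).app (op ⦋n+1⦌) ((fd.ι (n+1)).app c q.1) :=
      ConcreteCategory.congr_hom ((fd.ι (n+1)).naturality g) q.1
    rw [hnat]
    exact (ConcreteCategory.congr_hom ((F.map g).naturality q.2.1.down.op) _).symm

/-- The map `N_{n+1} ⊗ Δ⦋n+1⦌ ⟶ sk_{n+1} F`. -/
def topMap (n : ℕ) :
    tensorUC ((discretize C).obj (fd.N (n+1)))
      (SSet.stdSimplex.obj (SimplexCategory.mk (n+1))) ⟶ Sk.{w} F fd (n+1) where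
  app c :=
    { app := fun a => TypeCat.ofHom (fun q =>
        ⟨(F.obj c).map q.2.down.op ((fd.ι (n+1)).app c q.1),
          mem_theta F fd q.2.down q.1 (image_len_le q.2.down)⟩)
      naturality := fun a b α => by
        ext q
        apply Subtype.ext
        show (F.obj c).map (α.unop ≫ q.2.down).op ((fd.ι (n+1)).app c q.1)
          = (F.obj c).map α ((F.obj c).map q.2.down.op ((fd.ι (n+1)).app c q.1))
        erw [← FunctorToTypes.map_comp_apply]
        rfl }
  naturality c c' g := by
    apply NatTrans.ext
    funext a
    ext q
    apply Subtype.ext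
    show (F.obj c').map q.2.down.op ((fd.ι (n+1)).app c' ((fd.N (n+1)).map g q.1))
      = (F.map g).app a ((F.obj c).map q.2.down.op ((fd.ι (n+1)).app c q.1))
    have hnat : (fd.ι (n+1)).app c' ((fd.N (n+1)).map g q.1)
        = (F.map g).app (op ⦋n+1⦌) ((fd.ι (n+1)).app c q.1) :=
      ConcreteCategory.congr_hom ((fd.ι (n+1)).naturality g) q.1
    rw [hnat]
    exact (ConcreteCategory.congr_hom ((F.map g).naturality q.2.down.op) _).symm

lemma sq_comm (n : ℕ) :
    tensorUCMap (𝟙 ((discretize C).obj (fd.N (n+1)))) (SSet.boundary.{w} (n+1)).ι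
        ≫ topMap.{w} F fd n
      = attMap.{w} F fd n ≫ skIncl F fd (Nat.le_succ n) := by
  apply NatTrans.ext; funext c; apply NatTrans.ext; funext a; ext q
  exact Subtype.ext rfl

lemma pushout_pointwise (n : ℕ) (c : Cᵒᵖ) (a : SimplexCategoryᵒᵖ) :
    IsPushout
      (((tensorUCMap (𝟙 ((discretize C).obj (fd.N (n+1))))
          (SSet.boundary.{w} (n+1)).ι).app c).app a)
      (((attMap.{w} F fd n).app c).app a) (((topMap.{w} F fd n).app c).app a)
      (((skIncl F fd (Nat.le_succ n)).app c).app a) := by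
  have w0 : (((tensorUCMap (𝟙 ((discretize C).obj (fd.N (n+1))))
          (SSet.boundary.{w} (n+1)).ι).app c).app a)
        ≫ (((topMap.{w} F fd n).app c).app a)
      = (((attMap.{w} F fd n).app c).app a)
        ≫ (((skIncl F fd (Nat.le_succ n)).app c).app a) := by
    ext q
    exact Subtype.ext rfl
  refine IsPushout.of_isColimit (Helper.pushoutCoconeIsColimitOfTypes _ _ _ _ w0 ?_ ?_ ?_ ?_)
  · -- k injective
    intro u v h
    have h1 : u.1 = v.1 :=
      congrArg (fun (t : {x : (F.obj c).obj a // mem.{w} F fd (n+1) c a x}) => t.1) h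
    exact Subtype.ext h1
  · -- jointly surjective
    rintro ⟨x, ⟨⟨⟨⟨m⟩, σ, hσ⟩, y⟩, hm, hmap⟩⟩
    have hmle : m ≤ n + 1 := hm
    by_cases hmn : m ≤ n
    · exact Or.inl ⟨⟨x, ⟨⟨⟨⟨m⟩, σ, hσ⟩, y⟩, hmn, hmap⟩⟩, Subtype.ext rfl⟩
    · have hm1 : m = n + 1 := by omega
      subst hm1
      exact Or.inr ⟨(y, ULift.up σ), Subtype.ext hmap⟩
  · -- injectivity of the top map up to the boundary
    intro b b' h
    have hval := congrArg Subtype.val h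
    by_cases hs : Function.Surjective b.2.down.toOrderHom
      <;> by_cases hs' : Function.Surjective b'.2.down.toOrderHom
    · obtain ⟨hσe, hye⟩ := mapK_inj' F fd
        (show mapK F fd a.unop c ⟨⟨⟨n+1⟩, b.2.down, hs⟩, b.1⟩
          = mapK F fd a.unop c ⟨⟨⟨n+1⟩, b'.2.down, hs'⟩, b'.1⟩ from hval)
      exact Or.inl (Prod.ext hye (ULift.down_injective hσe))
    · exfalso
      obtain ⟨⟨⟨⟨m'⟩, σ', hσ'⟩, y'⟩, hm', hmap'⟩ :=
        mem_theta F fd b'.2.down b'.1 (Nat.lt_succ_iff.mp (image_len_lt b'.2.down hs'))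
      have hdeg : (n+1 : ℕ) = m' := mapK_deg_eq F fd
        (show mapK F fd a.unop c ⟨⟨⟨n+1⟩, b.2.down, hs⟩, b.1⟩
          = mapK F fd a.unop c ⟨⟨⟨m'⟩, σ', hσ'⟩, y'⟩ from hval.trans hmap'.symm)
      have hm'le : m' ≤ n := hm'
      omega
    · exfalso
      obtain ⟨⟨⟨⟨m'⟩, σ', hσ'⟩, y'⟩, hm', hmap'⟩ :=
        mem_theta F fd b.2.down b.1 (Nat.lt_succ_iff.mp (image_len_lt b.2.down hs))
      have hdeg : (n+1 : ℕ) = m' := mapK_deg_eq F fd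
        (show mapK F fd a.unop c ⟨⟨⟨n+1⟩, b'.2.down, hs'⟩, b'.1⟩
          = mapK F fd a.unop c ⟨⟨⟨m'⟩, σ', hσ'⟩, y'⟩ from hval.symm.trans hmap'.symm)
      have hm'le : m' ≤ n := hm'
      omega
    · exact Or.inr ⟨(b.1, ⟨b.2, hs⟩), (b'.1, ⟨b'.2, hs'⟩), rfl, rfl, Subtype.ext hval⟩
  · -- separation
    intro b cc h
    by_cases hs : Function.Surjective b.2.down.toOrderHom
    · exfalso
      have hval := congrArg Subtype.val h
      obtain ⟨⟨⟨⟨m'⟩, σ', hσ'⟩, y'⟩, hm', hmap'⟩ := cc.2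
      have hdeg : (n+1 : ℕ) = m' := mapK_deg_eq F fd
        (show mapK F fd a.unop c ⟨⟨⟨n+1⟩, b.2.down, hs⟩, b.1⟩
          = mapK F fd a.unop c ⟨⟨⟨m'⟩, σ', hσ'⟩, y'⟩ from hval.trans hmap'.symm)
      have hm'le : m' ≤ n := hm'
      omega
    · exact ⟨(b.1, ⟨b.2, hs⟩), rfl⟩

lemma pushout_step (n : ℕ) :
    IsPushout
      (tensorUCMap (𝟙 ((discretize C).obj (fd.N (n+1)))) (SSet.boundary.{w} (n+1)).ι)
      (attMap.{w} F fd n) (topMap.{w} F fd n) (skIncl F fd (Nat.le_succ n)) := by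
  refine Helper.isPushout_of_app ⟨sq_comm F fd n⟩ (fun c => ?_)
  refine Helper.isPushout_of_app ⟨congr_app (sq_comm F fd n) c⟩
    (fun a => pushout_pointwise F fd n c a)

/-- The cocone on the skeletal filtration with vertex `F`. -/
def coconeF : Cocone (skel.{w} F fd) where
  pt := F
  ι :=
    { app := fun n =>
        { app := fun c =>
            { app := fun a => TypeCat.ofHom (fun x => x.1)
              naturality := fun a b α => rfl }
          naturality := fun c c' g => by
            apply NatTrans.ext; funext a; ext x; rfl }
      naturality := fun n m h => by
        apply NatTrans.ext; funext c; apply NatTrans.ext; funext a; ext x; rfl }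

/-- The skeletal filtration converges to `F`. -/
noncomputable def coconeF_isColimit : IsColimit (coconeF.{w} F fd) := by
  apply evaluationJointlyReflectsColimits
  intro c
  apply evaluationJointlyReflectsColimits
  intro a
  apply Types.FilteredColimit.isColimitOf
  · intro x
    obtain ⟨p, hp⟩ := exists_decomp F fd a.unop c x
    exact ⟨p.1.1.down, ⟨x, ⟨p, le_refl _, hp⟩⟩, rfl⟩
  · intro i j xi xj hij
    refine ⟨max i j, homOfLE (le_max_left i j), homOfLE (le_max_right i j), ?_⟩
    apply Subtype.ext
    exact hij

end S15
end Paper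

/-- If a simplicial presheaf `F` has free degeneracies with
splitting presheaves `N_k`, then `F` is the colimit of a sequence of skeleta
`sk₀F → sk₁F → ⋯` where `sk₀F = N₀` and each `sk_nF` is obtained from
`sk_{n-1}F` by pushing out `N_n ⊗ ∂Δⁿ → N_n ⊗ Δⁿ`. -/
theorem statement15 {C : Type w} [SmallCategory C] (F : Cᵒᵖ ⥤ SSet.{w})
    (fd : Paper.FreeDegeneracies F) :
    ∃ G : ℕ ⥤ (Cᵒᵖ ⥤ SSet.{w}),
      Nonempty (G.obj 0 ≅ (Paper.discretize C).obj (fd.N 0)) ∧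
      (∀ n : ℕ,
        ∃ (att : Paper.tensorUC ((Paper.discretize C).obj (fd.N (n+1)))
            (SSet.boundary.{w} (n+1)).toSSet ⟶ G.obj n)
          (top : Paper.tensorUC ((Paper.discretize C).obj (fd.N (n+1)))
            (SSet.stdSimplex.obj (SimplexCategory.mk (n+1))) ⟶ G.obj (n+1)),
          IsPushout (Paper.tensorUCMap (𝟙 _) (SSet.boundary.{w} (n+1)).ι) att
            top (G.map (homOfLE (Nat.le_succ n)))) ∧
      ∃ (coc : Limits.Cocone G) (_ : Nonempty (Limits.IsColimit coc)),
        Nonempty (coc.pt ≅ F) := by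
  refine ⟨Paper.S15.skel F fd, ⟨Paper.S15.iso0 F fd⟩,
    fun n => ⟨Paper.S15.attMap F fd n, Paper.S15.topMap F fd n, Paper.S15.pushout_step F fd n⟩,
    Paper.S15.coconeF F fd, ⟨Paper.S15.coconeF_isColimit F fd⟩, ⟨Iso.refl F⟩⟩
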